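/- Let f : ℝ → ℝ be twice differentiable with |f''(x)| ≤ u for all x, where u > 0. If f(a) = f(b), f'(a) = f'(b) = k, and a ≠ b, then |b - a| ≥ 2|k|/u. -/
import Mathlib

theorem aux_lip (f : ℝ → ℝ) (u : ℝ)
    (hdiff2 : Differentiable ℝ (deriv f))
    (hbound : ∀ x, |deriv (deriv f) x| ≤ u) :
    ∀ x y : ℝ, |deriv f x - deriv f y| ≤ u * |x - y| := by
  intro x y
  have := Convex.norm_image_sub_le_of_norm_deriv_le (f := deriv f) (C := u) (s := Set.univ)
    (fun z _ => hdiff2 z) (fun z _ => by simpa [Real.norm_eq_abs] using hbound z)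
    convex_univ (Set.mem_univ y) (Set.mem_univ x)
  simpa [Real.norm_eq_abs] using this

theorem key (f : ℝ → ℝ) (u k a b : ℝ) (hu : 0 < u)
    (hdiff : Differentiable ℝ f) (hdiff2 : Differentiable ℝ (deriv f))
    (hbound : ∀ x, |deriv (deriv f) x| ≤ u)
    (hab : f a = f b) (ha' : deriv f a = k) (hb' : deriv f b = k) (hlt : a < b) :
    2 * |k| / u ≤ b - a := by
  obtain ⟨c, hc, hc0⟩ := exists_deriv_eq_zero hlt hdiff.continuous.continuousOn hab
  have h1 : |k| ≤ u * (c - a) := by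
    have := aux_lip f u hdiff2 hbound a c
    rw [ha', hc0, sub_zero] at this
    rw [show |a - c| = c - a by rw [abs_sub_comm]; exact abs_of_nonneg (by linarith [hc.1])] at this
    exact this
  have h2 : |k| ≤ u * (b - c) := by
    have := aux_lip f u hdiff2 hbound b c
    rw [hb', hc0, sub_zero] at this
    rw [show |b - c| = b - c from abs_of_nonneg (by linarith [hc.2])] at this
    exact this
  rw [div_le_iff₀ hu]
  nlinarith

theorem stmt_1 (f : ℝ → ℝ) (u k a b : ℝ) (hu : 0 < u)
    (hdiff : Differentiable ℝ f) (hdiff2 : Differentiable ℝ (deriv f))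
    (hbound : ∀ x, |deriv (deriv f) x| ≤ u)
    (hab : f a = f b) (ha' : deriv f a = k) (hb' : deriv f b = k) (hne : a ≠ b) :
    2 * |k| / u ≤ |b - a| := by
  rcases hne.lt_or_gt with h | h
  · have := key f u k a b hu hdiff hdiff2 hbound hab ha' hb' h
    rwa [show |b - a| = b - a from abs_of_nonneg (by linarith)]
  · have := key f u k b a hu hdiff hdiff2 hbound hab.symm hb' ha' h
    rwa [show |b - a| = a - b by rw [abs_sub_comm]; exact abs_of_nonneg (by linarith)]
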